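/- Let $R$ be an algebraic curvature tensor on an inner product space, and let $e_0, e_1, e_\alpha, e_\beta$ be orthonormal vectors. Suppose $R(X,Y,X,Y) \ge 0$ for all vectors $X, Y$ (non-negative sectional-type curvature), and suppose $R_{1\alpha1\alpha} = R_{1010} = R_{\alpha0\alpha0} = R_{\beta0\beta0} = 0$. Then also $R_{0\alpha1\alpha} = R_{101\alpha} = R_{0\alpha10} = R_{\beta\alpha\beta0} = R_{\beta0\alpha0} = 0$. -/

import Mathlib

open scoped RealInnerProductSpace

private lemma quad_lin_zero (B C : ℝ) (h : ∀ t : ℝ, 0 ≤ B * t + C * t ^ 2) : B = 0 := by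
  by_contra hB
  have hB2 : 0 < B ^ 2 := by positivity
  set ε : ℝ := 1 / (|C| + 1) with hεdef
  have habs : (0:ℝ) ≤ |C| := abs_nonneg C
  have hεpos : 0 < ε := by positivity
  have hCε : C * ε < 1 := by
    have h1 : C * ε ≤ |C| * ε := by
      apply mul_le_mul_of_nonneg_right (le_abs_self C) (le_of_lt hεpos)
    have h2 : |C| * ε < 1 := by
      rw [hεdef]
      rw [mul_one_div, div_lt_one (by linarith)]
      linarith
    linarith
  have h' := h (-(B * ε))
  nlinarith [mul_pos hB2 hεpos, mul_pos (mul_pos hB2 hεpos) hεpos]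

private lemma key_vanish {V : Type*} [NormedAddCommGroup V] [InnerProductSpace ℝ V]
    (R : MultilinearMap ℝ (fun _ : Fin 4 => V) ℝ)
    (hpair : ∀ x y z w : V, R ![x, y, z, w] = R ![z, w, x, y])
    (hnonneg : ∀ x y : V, 0 ≤ R ![x, y, x, y])
    (a b v : V) (hz : R ![a, b, a, b] = 0) :
    R ![v, b, a, b] = 0 := by
  have add1 : ∀ x y z : V, R ![x + y, b, z, b] = R ![x, b, z, b] + R ![y, b, z, b] := by
    intro x y z
    have e : ∀ w : V, Function.update ![x, b, z, b] (0 : Fin 4) w = ![w, b, z, b] := by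
      intro w; ext i; fin_cases i <;> simp
    have h := R.map_update_add ![x, b, z, b] 0 x y
    rw [e, e, e] at h; exact h
  have add3 : ∀ x y z : V, R ![z, b, x + y, b] = R ![z, b, x, b] + R ![z, b, y, b] := by
    intro x y z
    have e : ∀ w : V, Function.update ![z, b, x, b] (2 : Fin 4) w = ![z, b, w, b] := by
      intro w; ext i; fin_cases i <;> simp
    have h := R.map_update_add ![z, b, x, b] 2 x y
    rw [e, e, e] at h; exact h
  have smul1 : ∀ (t : ℝ) (x z : V), R ![t • x, b, z, b] = t * R ![x, b, z, b] := by
    intro t x z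
    have e : ∀ w : V, Function.update ![x, b, z, b] (0 : Fin 4) w = ![w, b, z, b] := by
      intro w; ext i; fin_cases i <;> simp
    have h := R.map_update_smul ![x, b, z, b] 0 t x
    rw [e, e] at h; exact h
  have smul3 : ∀ (t : ℝ) (x z : V), R ![z, b, t • x, b] = t * R ![z, b, x, b] := by
    intro t x z
    have e : ∀ w : V, Function.update ![z, b, x, b] (2 : Fin 4) w = ![z, b, w, b] := by
      intro w; ext i; fin_cases i <;> simp
    have h := R.map_update_smul ![z, b, x, b] 2 t x
    rw [e, e] at h; exact h
  have hpairv : R ![a, b, v, b] = R ![v, b, a, b] := hpair a b v b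
  have expand : ∀ t : ℝ,
      R ![a + t • v, b, a + t • v, b]
        = (2 * R ![v, b, a, b]) * t + R ![v, b, v, b] * t ^ 2 := by
    intro t
    rw [add1, add3, add3, smul1, smul1, smul3, smul3, hz, hpairv]
    ring
  have hq : ∀ t : ℝ, 0 ≤ (2 * R ![v, b, a, b]) * t + R ![v, b, v, b] * t ^ 2 := by
    intro t
    rw [← expand t]
    exact hnonneg _ _
  have := quad_lin_zero _ _ hq
  linarith

/-- let `R` be an algebraic curvature tensor (a 4-multilinear form
with the Riemann symmetries and first Bianchi identity) on a real inner product
space, with non-negative biquadratic form `R(X,Y,X,Y) ≥ 0`, and let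
`e₀, e₁, e_α, e_β` be orthonormal vectors.  If
`R_{1α1α} = R_{1010} = R_{α0α0} = R_{β0β0} = 0`, then also
`R_{0α1α} = R_{101α} = R_{0α10} = R_{βαβ0} = R_{β0α0} = 0`. -/
theorem curvature_vanishing_from_nonnegativity
    {V : Type*} [NormedAddCommGroup V] [InnerProductSpace ℝ V]
    (R : MultilinearMap ℝ (fun _ : Fin 4 => V) ℝ)
    -- Riemann symmetries
    (hanti1 : ∀ x y z w : V, R ![x, y, z, w] = -R ![y, x, z, w])
    (hanti2 : ∀ x y z w : V, R ![x, y, z, w] = -R ![x, y, w, z])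
    (hpair : ∀ x y z w : V, R ![x, y, z, w] = R ![z, w, x, y])
    (hbianchi : ∀ x y z w : V,
      R ![x, y, z, w] + R ![y, z, x, w] + R ![z, x, y, w] = 0)
    -- non-negative sectional-type curvature
    (hnonneg : ∀ x y : V, 0 ≤ R ![x, y, x, y])
    (e₀ e₁ eα eβ : V)
    -- orthonormality
    (h00 : (inner ℝ e₀ e₀ : ℝ) = 1) (h11 : (inner ℝ e₁ e₁ : ℝ) = 1)
    (hαα : (inner ℝ eα eα : ℝ) = 1) (hββ : (inner ℝ eβ eβ : ℝ) = 1)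
    (h01 : (inner ℝ e₀ e₁ : ℝ) = 0) (h0α : (inner ℝ e₀ eα : ℝ) = 0) (h0β : (inner ℝ e₀ eβ : ℝ) = 0)
    (h1α : (inner ℝ e₁ eα : ℝ) = 0) (h1β : (inner ℝ e₁ eβ : ℝ) = 0) (hαβ : (inner ℝ eα eβ : ℝ) = 0)
    -- vanishing hypotheses
    (hv1 : R ![e₁, eα, e₁, eα] = 0)
    (hv2 : R ![e₁, e₀, e₁, e₀] = 0)
    (hv3 : R ![eα, e₀, eα, e₀] = 0)
    (hv4 : R ![eβ, e₀, eβ, e₀] = 0) :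
    R ![e₀, eα, e₁, eα] = 0 ∧
    R ![e₁, e₀, e₁, eα] = 0 ∧
    R ![e₀, eα, e₁, e₀] = 0 ∧
    R ![eβ, eα, eβ, e₀] = 0 ∧
    R ![eβ, e₀, eα, e₀] = 0 := by
  -- flipped versions of the vanishing hypotheses
  have hz01 : R ![e₀, e₁, e₀, e₁] = 0 := by
    have a1 := hanti1 e₀ e₁ e₀ e₁
    have a2 := hanti2 e₁ e₀ e₀ e₁
    linarith
  have hz0β : R ![e₀, eβ, e₀, eβ] = 0 := by
    have a1 := hanti1 e₀ eβ e₀ eβ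
    have a2 := hanti2 eβ e₀ e₀ eβ
    linarith
  refine ⟨?_, ?_, ?_, ?_, ?_⟩
  · exact key_vanish R hpair hnonneg e₁ eα e₀ hv1
  · have t2 := key_vanish R hpair hnonneg e₀ e₁ eα hz01
    have a0 := hpair e₁ e₀ e₁ eα
    have a1 := hanti1 e₁ eα e₁ e₀
    have a2 := hanti2 eα e₁ e₁ e₀
    linarith
  · have t3 := key_vanish R hpair hnonneg e₁ e₀ eα hv2
    have a1 := hanti1 e₀ eα e₁ e₀
    linarith
  · have t4 := key_vanish R hpair hnonneg e₀ eβ eα hz0β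
    have a1 := hanti1 eβ eα eβ e₀
    have a2 := hanti2 eα eβ eβ e₀
    linarith
  · exact key_vanish R hpair hnonneg eα e₀ eβ hv3
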